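/- arXiv:math/0307387 — 4 statements merged into one kernel-verified Lean document; each statement's English description precedes it below -/
import Mathlib

section
/- Let R be a commutative ring and F : Mod(R) ≌ Mod(R) an R-linear equivalence of categories. Set M = F(R). Then M is an invertible R-module, i.e., there exists an R-module N with an R-linear isomorphism M ⊗_R N ≅ R, and there is a family of R-linear isomorphisms F(P) ≅ M ⊗_R P natural in P ∈ Mod(R). -/
open CategoryTheory TensorProduct MonoidalCategory

noncomputable section

namespace Statement4Aux

variable {R : Type} [CommRing R] (F : ModuleCat R ≌ ModuleCat R)
    [F.functor.Additive] [F.functor.Linear R]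

/-- The linear map `Hom(M, P) → G(P)`, `g ↦ G(g)(η_R(1))`. -/
def Phi (P : ModuleCat R) :
    (F.functor.obj (ModuleCat.of R R) ⟶ P) →ₗ[R] F.inverse.obj P where
  toFun g := F.inverse.map (g : F.functor.obj (ModuleCat.of R R) ⟶ P)
      (F.unit.app (ModuleCat.of R R) (1 : R))
  map_add' g g' := by
    show F.inverse.map ((g + g' : F.functor.obj (ModuleCat.of R R) ⟶ P)) _ = _
    rw [F.inverse.map_add]; rfl
  map_smul' r g := by
    show F.inverse.map ((r • g : F.functor.obj (ModuleCat.of R R) ⟶ P)) _ = _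
    rw [F.inverse.map_smul]; rfl

lemma Phi_eq (P : ModuleCat R) (g : F.functor.obj (ModuleCat.of R R) ⟶ P) :
    Phi F P g = (F.toAdjunction.homEquiv (ModuleCat.of R R) P g) (1 : R) := by
  rw [Adjunction.homEquiv_unit]
  rfl

lemma Phi_bijective (P : ModuleCat R) : Function.Bijective (Phi F P) := by
  have : ⇑(Phi F P) = (fun h : (ModuleCat.of R R ⟶ F.inverse.obj P) => h (1 : R)) ∘
      (F.toAdjunction.homEquiv (ModuleCat.of R R) P) := by
    funext g; exact Phi_eq F P g
  rw [this]
  exact ((LinearMap.ringLmapEquivSelf R R (F.inverse.obj P)).bijective.comp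
      ModuleCat.homEquiv.bijective).comp
    (F.toAdjunction.homEquiv _ _).bijective

/-- Natural isomorphism `ihom M ≅ F.inverse`. -/
def rightIso : ihom (F.functor.obj (ModuleCat.of R R)) ≅ F.inverse :=
  NatIso.ofComponents
    (fun P => (LinearEquiv.ofBijective (Phi F P) (Phi_bijective F P)).toModuleIso)
    (by
      intro P Q f
      ext g
      show Phi F Q ((ihom _).map f g) = F.inverse.map f (Phi F P g)
      change Phi F Q (g ≫ f) = _
      show F.inverse.map (g ≫ f) _ = _
      erw [F.inverse.map_comp]
      rfl)

/-- The natural isomorphism `F ≅ M ⊗ -`, by uniqueness of left adjoints. -/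
def leftIso : F.functor ≅ tensorLeft (F.functor.obj (ModuleCat.of R R)) :=
  F.toAdjunction.leftAdjointUniq
    ((ihom.adjunction (F.functor.obj (ModuleCat.of R R))).ofNatIsoRight (rightIso F))

end Statement4Aux

/-- If `F : ModuleCat R ≌ ModuleCat R` is an `R`-linear self-equivalence and
`M = F(R)`, then `M` is an invertible `R`-module and there is a family of `R`-linear
isomorphisms `F(P) ≅ M ⊗[R] P` natural in `P` (i.e. a natural isomorphism between `F`
and the functor `M ⊗[R] (-)`). -/
theorem statement4 (R : Type) [CommRing R] (F : ModuleCat R ≌ ModuleCat R)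
    [F.functor.Additive] [F.functor.Linear R] :
    (∃ N : ModuleCat R,
      Nonempty (TensorProduct R ↥(F.functor.obj (ModuleCat.of R R)) ↥N ≃ₗ[R] R)) ∧
    Nonempty (F.functor ≅ tensorLeft (F.functor.obj (ModuleCat.of R R))) := by
  refine ⟨⟨ModuleCat.of R (ULift (F.inverse.obj (ModuleCat.of R R))), ⟨?_⟩⟩,
    ⟨Statement4Aux.leftIso F⟩⟩
  exact (TensorProduct.congr (LinearEquiv.refl R _) ULift.moduleEquiv).trans
    ((((Statement4Aux.leftIso F).symm.app (F.inverse.obj (ModuleCat.of R R))) ≪≫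
      F.counitIso.app (ModuleCat.of R R)).toLinearEquiv)

end
end

section
/- Let R be a commutative ring and M an R-module. The functor M ⊗_R (−) : Mod(R) → Mod(R) is an equivalence of categories if and only if M is invertible, i.e., if and only if there exists an R-module N with an R-linear isomorphism M ⊗_R N ≅ R. -/
open CategoryTheory TensorProduct MonoidalCategory

noncomputable section

/-- An invertible module is finitely generated. -/
lemma aux_finite (R : Type) [CommRing R] (M : Type) [AddCommGroup M] [Module R M]
    {N : Type*} [AddCommGroup N] [Module R N] (e : TensorProduct R M N ≃ₗ[R] R) :
    Module.Finite R N := by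
  classical
  -- every element of `M ⊗ N` is a multiple of `u := e.symm 1`
  have key : ∀ x : M ⊗[R] N, x = e x • e.symm 1 := by
    intro x
    apply e.injective
    simp [smul_eq_mul]
  obtain ⟨S, hS⟩ := TensorProduct.exists_finset (e.symm (1 : R))
  set N' : Submodule R N := Submodule.span R (S.image Prod.snd : Finset N) with hN'
  suffices htop : N' = ⊤ by
    exact ⟨htop ▸ ⟨S.image Prod.snd, rfl⟩⟩
  -- `M ⊗ (N ⧸ N')` is trivial
  have hzero : ∀ y : M ⊗[R] (N ⧸ N'), y = 0 := by
    intro y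
    obtain ⟨x, rfl⟩ := LinearMap.lTensor_surjective M (Submodule.mkQ_surjective N') y
    rw [key x, map_smul, hS, map_sum]
    have : ∀ i ∈ S, (LinearMap.lTensor M N'.mkQ) (i.1 ⊗ₜ[R] i.2) = 0 := by
      intro i hi
      have : N'.mkQ i.2 = 0 := by
        rw [Submodule.mkQ_apply, Submodule.Quotient.mk_eq_zero]
        exact Submodule.subset_span (Finset.mem_coe.2 (Finset.mem_image_of_mem Prod.snd hi))
      simp [LinearMap.lTensor_tmul, this]
    rw [Finset.sum_congr rfl this]
    simp
  have hsub : Subsingleton (M ⊗[R] (N ⧸ N')) :=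
    ⟨fun a b => by rw [hzero a, hzero b]⟩
  -- hence `N ⧸ N'` is trivial
  have hQ : Subsingleton (N ⧸ N') := by
    let eq1 : (N ⧸ N') ≃ₗ[R] TensorProduct R (N ⧸ N') R := (TensorProduct.rid R (N ⧸ N')).symm
    let eq2 : TensorProduct R (N ⧸ N') R ≃ₗ[R] TensorProduct R (N ⧸ N') (TensorProduct R M N) :=
      TensorProduct.congr (LinearEquiv.refl R _) e.symm
    let eq3 : TensorProduct R (N ⧸ N') (TensorProduct R M N) ≃ₗ[R]
        TensorProduct R (TensorProduct R (N ⧸ N') M) N := (TensorProduct.assoc R _ _ _).symm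
    let eq4 : TensorProduct R (TensorProduct R (N ⧸ N') M) N ≃ₗ[R]
        TensorProduct R (TensorProduct R M (N ⧸ N')) N :=
      TensorProduct.congr (TensorProduct.comm R _ _) (LinearEquiv.refl R _)
    exact (eq1.trans (eq2.trans (eq3.trans eq4))).toEquiv.subsingleton
  rw [Submodule.eq_top_iff']
  intro n
  rw [← Submodule.Quotient.mk_eq_zero]
  exact Subsingleton.elim _ _

/-- For an `R`-module `M`, the functor `M ⊗[R] (-) : ModuleCat R ⥤ ModuleCat R` is an
equivalence of categories if and only if `M` is invertible, i.e. there is an `R`-module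
`N` with `M ⊗[R] N ≅ R`. -/
theorem statement5 (R : Type) [CommRing R] (M : Type) [AddCommGroup M] [Module R M] :
    (tensorLeft (ModuleCat.of R M)).IsEquivalence ↔
      ∃ N : ModuleCat R, Nonempty (TensorProduct R M ↥N ≃ₗ[R] R) := by
  constructor
  · intro h
    let E := (tensorLeft (ModuleCat.of R M)).asEquivalence
    let N₀ : ModuleCat R := E.inverse.obj (ModuleCat.of R R)
    let e₀ : TensorProduct R M ↥N₀ ≃ₗ[R] R :=
      (E.counitIso.app (ModuleCat.of R R)).toLinearEquiv
    refine ⟨ModuleCat.of R (ULift ↥N₀), ⟨?_⟩⟩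
    exact (TensorProduct.congr (LinearEquiv.refl R M) ULift.moduleEquiv).trans e₀
  · rintro ⟨N, ⟨e⟩⟩
    -- shrink `N` to universe 0
    have : Module.Finite R ↥N := aux_finite R M e
    have hsmall : Small.{0} ↥N := by
      obtain ⟨n, s, hs⟩ := Module.Finite.exists_fin (R := R) (M := ↥N)
      refine small_of_surjective (f := fun v : Fin n → R => ∑ i, v i • s i) ?_
      intro x
      have hx : x ∈ Submodule.span R (Set.range s) := hs ▸ Submodule.mem_top
      exact (Submodule.mem_span_range_iff_exists_fun R).1 hx
    let N₀ : ModuleCat R := ModuleCat.of R (Shrink.{0} ↥N)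
    let e₀ : TensorProduct R M (Shrink.{0} ↥N) ≃ₗ[R] R :=
      (TensorProduct.congr (LinearEquiv.refl R M) (Shrink.linearEquiv.{0} R ↥N)).trans e
    let j : (MonoidalCategoryStruct.tensorObj (ModuleCat.of R M) N₀ : ModuleCat R) ≅ 𝟙_ (ModuleCat R) := e₀.toModuleIso
    let i : (MonoidalCategoryStruct.tensorObj N₀ (ModuleCat.of R M) : ModuleCat R) ≅ 𝟙_ (ModuleCat R) := β_ N₀ (ModuleCat.of R M) ≪≫ j
    let C := ModuleCat R
    let unit : 𝟭 C ≅ tensorLeft (ModuleCat.of R M) ⋙ tensorLeft N₀ :=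
      (leftUnitorNatIso C).symm ≪≫ ((tensoringLeft C).mapIso i).symm ≪≫
        tensorLeftTensor N₀ (ModuleCat.of R M)
    let counit : tensorLeft N₀ ⋙ tensorLeft (ModuleCat.of R M) ≅ 𝟭 C :=
      (tensorLeftTensor (ModuleCat.of R M) N₀).symm ≪≫ (tensoringLeft C).mapIso j ≪≫
        leftUnitorNatIso C
    exact (CategoryTheory.Equivalence.mk _ _ unit counit).isEquivalence_functor

end
end

section
/- Let R be a commutative local ring and M an invertible R-module, i.e., assume there exists an R-module N with an R-linear isomorphism M ⊗_R N ≅ R. Then M is isomorphic to R as an R-module (M is free of rank one). -/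
open TensorProduct

noncomputable section

/-- Tensoring with a subsingleton module yields a subsingleton. -/
lemma aux_subsingleton_tensor (R A B : Type) [CommRing R] [AddCommGroup A] [Module R A]
    [AddCommGroup B] [Module R B] [Subsingleton B] : Subsingleton (A ⊗[R] B) := by
  have hz : ∀ z : A ⊗[R] B, z = 0 := by
    intro z
    induction z using TensorProduct.induction_on with
    | zero => rfl
    | tmul a b => rw [Subsingleton.elim b (0 : B), tmul_zero]
    | add x y hx hy => rw [hx, hy, add_zero]
  exact ⟨fun x y => by rw [hz x, hz y]⟩

/-- In a local ring, an idempotent is zero or one. -/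
lemma aux_idem (R : Type) [CommRing R] [IsLocalRing R] (p : R) (hp : p * p = p) :
    p = 0 ∨ p = 1 := by
  rcases IsLocalRing.isUnit_or_isUnit_one_sub_self p with h | h
  · right
    exact h.mul_left_cancel (b := p) (c := 1) (by rw [mul_one]; exact hp)
  · left
    exact h.mul_left_cancel (b := p) (c := 0) (by rw [mul_zero]; linear_combination -hp)

/-- If a local ring is isomorphic to a product of two modules, one factor is trivial. -/
lemma aux_prod (R A B : Type) [CommRing R] [IsLocalRing R] [AddCommGroup A] [Module R A]
    [AddCommGroup B] [Module R B] (f : R ≃ₗ[R] A × B) :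
    Subsingleton A ∨ Subsingleton B := by
  set a : A := (f 1).1 with ha
  set b : B := (f 1).2 with hb
  have hf : ∀ r : R, f r = (r • a, r • b) := by
    intro r
    have : f r = r • f 1 := by rw [← map_smul, smul_eq_mul, mul_one]
    rw [this]; rfl
  set p : R := f.symm (a, 0) with hp
  have hfp : f p = (a, 0) := by rw [hp, f.apply_symm_apply]
  have hpa : p • a = a := congrArg Prod.fst ((hf p).symm.trans hfp)
  have hpb : p • b = 0 := congrArg Prod.snd ((hf p).symm.trans hfp)
  have hidem : p * p = p := by
    have h1 : (p * p) • a = a := by rw [mul_smul, hpa, hpa]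
    have h2 : (p * p) • b = 0 := by rw [mul_smul, hpb, smul_zero]
    have : f (p * p) = f p := by rw [hf (p * p), hfp, h1, h2]
    exact f.injective this
  rcases aux_idem R p hidem with h0 | h1
  · -- p = 0, so a = 0, so A is trivial
    left
    have haz : a = 0 := by rw [← hpa, h0, zero_smul]
    refine ⟨fun x y => ?_⟩
    have hx : ∀ z : A, z = 0 := by
      intro z
      obtain ⟨r, hr⟩ := f.surjective (z, 0)
      have := (hf r).symm.trans hr
      have := congrArg Prod.fst this
      simp only at this
      rw [← this, haz, smul_zero]
    rw [hx x, hx y]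
  · -- p = 1, so b = 0, so B is trivial
    right
    have hbz : b = 0 := by rw [← hpb, h1, one_smul]
    refine ⟨fun x y => ?_⟩
    have hx : ∀ z : B, z = 0 := by
      intro z
      obtain ⟨r, hr⟩ := f.surjective (0, z)
      have := (hf r).symm.trans hr
      have := congrArg Prod.snd this
      simp only at this
      rw [← this, hbz, smul_zero]
    rw [hx x, hx y]

/-- An invertible module over a commutative local ring is free of rank one. -/
theorem statement8 (R M : Type) [CommRing R] [IsLocalRing R] [AddCommGroup M] [Module R M]
    (N : Type) [AddCommGroup N] [Module R N]
    (h : Nonempty (TensorProduct R M N ≃ₗ[R] R)) :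
    Nonempty (M ≃ₗ[R] R) := by
  obtain ⟨e⟩ := h
  -- Find a pure tensor whose image is a unit
  have key : ∀ t : M ⊗[R] N, IsUnit (e t) → ∃ m n, IsUnit (e (m ⊗ₜ[R] n)) := by
    intro t
    induction t using TensorProduct.induction_on with
    | zero => intro h0; rw [map_zero] at h0; exact absurd h0 not_isUnit_zero
    | tmul m n => intro hu; exact ⟨m, n, hu⟩
    | add x y hx hy =>
      intro hu
      rw [map_add] at hu
      rcases IsLocalRing.isUnit_or_isUnit_of_isUnit_add hu with h' | h'
      · exact hx h'
      · exact hy h'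
  obtain ⟨m₀, n₀, hu⟩ := key (e.symm 1) (by simp)
  set v := hu.unit with hv
  -- the projection π : M → R and section σ : R → M
  set π : M →ₗ[R] R := e.toLinearMap ∘ₗ (TensorProduct.mk R M N).flip n₀ with hπ
  have hπ_apply : ∀ m : M, π m = e (m ⊗ₜ[R] n₀) := fun m => rfl
  set σ : R →ₗ[R] M := LinearMap.toSpanSingleton R M (((v⁻¹ : Rˣ) : R) • m₀) with hσ
  have hσ_apply : ∀ r : R, σ r = r • (((v⁻¹ : Rˣ) : R) • m₀) := fun r => rfl
  have hproj : ∀ r : R, π (σ r) = r := by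
    intro r
    rw [hσ_apply, hπ_apply, ← smul_tmul', ← smul_tmul', map_smul, map_smul, smul_eq_mul,
      smul_eq_mul]
    have hvv : (e (m₀ ⊗ₜ[R] n₀)) = (v : R) := (IsUnit.unit_spec hu).symm
    rw [hvv, Units.inv_mul, mul_one]
  have hπ_surj : Function.Surjective π := fun r => ⟨σ r, hproj r⟩
  -- split the exact sequence 0 → ker π → M → R → 0
  have hexact : Function.Exact (LinearMap.ker π).subtype π := LinearMap.exact_subtype_ker_map π
  have hcomp : π ∘ₗ σ = LinearMap.id := LinearMap.ext hproj
  obtain ⟨eM, -⟩ := hexact.splitSurjectiveEquiv (Submodule.injective_subtype _) ⟨σ, hcomp⟩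
  -- eM : M ≃ₗ[R] (ker π) × R
  -- tensor with N : R ≃ M ⊗ N ≃ ((ker π) × R) ⊗ N ≃ (ker π ⊗ N) × (R ⊗ N)
  set K := LinearMap.ker π
  have big : R ≃ₗ[R] (K ⊗[R] N) × (R ⊗[R] N) :=
    e.symm ≪≫ₗ TensorProduct.congr eM (LinearEquiv.refl R N) ≪≫ₗ
      TensorProduct.prodLeft R R (K : Type) R N
  rcases aux_prod R (K ⊗[R] N) (R ⊗[R] N) big with hA | hB
  · -- K ⊗ N trivial ⟹ K trivial
    have hKMN : Subsingleton ((K ⊗[R] N) ⊗[R] M) := by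
      have : ∀ z : (K ⊗[R] N) ⊗[R] M, z = 0 := by
        intro z
        induction z using TensorProduct.induction_on with
        | zero => rfl
        | tmul x m => rw [Subsingleton.elim x (0 : K ⊗[R] N), zero_tmul]
        | add x y hx hy => rw [hx, hy, add_zero]
      exact ⟨fun x y => by rw [this x, this y]⟩
    -- K ≃ K ⊗ R ≃ K ⊗ (M ⊗ N) ≃ (K ⊗ M) ⊗ N ≃ (K ⊗ N) ⊗ M
    have eK : (K : Type) ≃ₗ[R] (K ⊗[R] N) ⊗[R] M :=
      (TensorProduct.rid R K).symm ≪≫ₗ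
        TensorProduct.congr (LinearEquiv.refl R K) e.symm ≪≫ₗ
        (TensorProduct.assoc R K M N).symm ≪≫ₗ
        TensorProduct.congr (TensorProduct.comm R K M) (LinearEquiv.refl R N) ≪≫ₗ
        (TensorProduct.assoc R M K N) ≪≫ₗ
        (TensorProduct.comm R M ((K : Type) ⊗[R] N))
    have hK : Subsingleton (K : Type) := eK.toEquiv.subsingleton
    -- hence π is injective
    have hπ_inj : Function.Injective π := by
      rw [← LinearMap.ker_eq_bot]
      rw [Submodule.eq_bot_iff]
      intro x hx
      have : (⟨x, hx⟩ : K) = 0 := Subsingleton.elim _ _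
      exact congrArg Subtype.val this
    exact ⟨LinearEquiv.ofBijective π ⟨hπ_inj, hπ_surj⟩⟩
  · -- R ⊗ N trivial ⟹ N trivial ⟹ R trivial, contradiction
    exfalso
    have hN : Subsingleton N := (TensorProduct.lid R N).symm.toEquiv.subsingleton
    have hMN : Subsingleton (M ⊗[R] N) := aux_subsingleton_tensor R M N
    have : Subsingleton R := e.symm.toEquiv.subsingleton
    exact one_ne_zero (Subsingleton.elim (1 : R) 0)

end
end

section
/- Let R be a commutative local ring and A an Azumaya R-algebra. Then every R-algebra automorphism of A is inner: for every R-algebra automorphism σ : A ≅ A there exists a unit u of A such that σ(a) = u a u⁻¹ for all a ∈ A. -/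
open TensorProduct

noncomputable section

/-- The canonical `R`-linear map `A ⊗[R] Aᵐᵒᵖ →ₗ[R] End_R(A)`, `a ⊗ b ↦ (x ↦ a * x * b)`. -/
noncomputable def azumayaMulLeftRight (R A : Type) [CommRing R] [Ring A] [Algebra R A] :
    TensorProduct R A Aᵐᵒᵖ →ₗ[R] Module.End R A :=
  TensorProduct.lift <|
    LinearMap.mk₂ R (fun a b => LinearMap.mulLeftRight R (a, b.unop))
      (fun a a' b => LinearMap.ext fun x => by
        simp [LinearMap.add_apply, add_mul])
      (fun r a b => LinearMap.ext fun x => by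
        simp [LinearMap.smul_apply, smul_mul_assoc])
      (fun a b b' => LinearMap.ext fun x => by
        simp [LinearMap.add_apply, mul_add])
      (fun r a b => LinearMap.ext fun x => by
        simp [LinearMap.smul_apply, mul_smul_comm])

/-- An Azumaya `R`-algebra: an `R`-algebra which is faithful, finitely generated and
projective as an `R`-module, and such that the natural map `A ⊗[R] Aᵐᵒᵖ → End_R(A)`,
`a ⊗ b ↦ (x ↦ a * x * b)`, is bijective. -/
def IsAzumaya' (R A : Type) [CommRing R] [Ring A] [Algebra R A] : Prop :=
  Module.annihilator R A = ⊥ ∧ Module.Finite R A ∧ Module.Projective R A ∧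
    Function.Bijective (azumayaMulLeftRight R A)

section EndAut

variable {R A : Type} [CommRing R] [IsLocalRing R] [Ring A] [Algebra R A]

open Module

/-- Matrix-unit multiplication rule for the basis `b.end` of `End R A`. -/
lemma SN.end_mul {ι : Type*} [Fintype ι] [DecidableEq ι] (b : Basis ι R A) (i j k l : ι) :
    (b.end (i, j)) * (b.end (k, l)) = if j = k then b.end (i, l) else 0 := by
  apply b.ext
  intro m
  simp only [Module.End.mul_apply, Basis.end_apply_apply]
  split_ifs with h1 h2 h3 <;> simp_all [Basis.end_apply_apply]

lemma SN.end_sum {ι : Type*} [Fintype ι] [DecidableEq ι] (b : Basis ι R A) :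
    (∑ i, b.end (i, i)) = (1 : Module.End R A) := by
  apply b.ext
  intro m
  simp [LinearMap.sum_apply, Basis.end_apply_apply, Finset.sum_ite_eq]

/-- Skolem–Noether for endomorphism algebras over a local ring. -/
theorem SN.end_aut_exists_conj [Module.Finite R A] [Module.Free R A] [Nontrivial A]
    (Φ : Module.End R A ≃ₐ[R] Module.End R A) :
    ∃ g : A ≃ₗ[R] A, ∀ (T : Module.End R A) (x : A), Φ T (g x) = g (T x) := by
  classical
  let ι := Module.Free.ChooseBasisIndex R A
  let b : Basis ι R A := Module.Free.chooseBasis R A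
  have hne : Nonempty ι := b.index_nonempty
  obtain ⟨i₀⟩ := hne
  set f : ι → ι → Module.End R A := fun i j => Φ (b.end (i, j)) with hf
  have fmul : ∀ i j k l, f i j * f k l = if j = k then f i l else 0 := by
    intro i j k l
    rw [hf]; simp only
    rw [← map_mul, SN.end_mul]
    split_ifs <;> simp
  have fsum : (∑ i, f i i) = 1 := by
    rw [hf]; simp only
    rw [← map_sum, SN.end_sum, map_one]
  have fcomp : ∀ (i j k l : ι) (x : A), f i j (f k l x) = if j = k then f i l x else 0 := by
    intro i j k l x
    have h := congrArg (fun T : Module.End R A => T x) (fmul i j k l)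
    simp only [Module.End.mul_apply] at h
    rw [h]
    split_ifs <;> simp
  set N : Submodule R A := LinearMap.range (f i₀ i₀) with hN
  have memN : ∀ (i : ι) (x : A), f i₀ i x ∈ N := by
    intro i x
    exact ⟨f i₀ i x, by rw [fcomp]; simp⟩
  have fixN : ∀ w ∈ N, f i₀ i₀ w = w := by
    rintro w ⟨z, rfl⟩
    rw [fcomp]; simp
  -- A ≃ₗ (ι → N)
  let F : A →ₗ[R] (ι → N) := LinearMap.pi fun i => (f i₀ i).codRestrict N (memN i)
  let G : (ι → N) →ₗ[R] A := ∑ i, (f i i₀ ∘ₗ N.subtype) ∘ₗ LinearMap.proj i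
  have hGF : ∀ x, G (F x) = x := by
    intro x
    have h1 : G (F x) = ∑ i, f i i₀ (f i₀ i x) := by
      simp [G, F, LinearMap.sum_apply]
    rw [h1]
    have h2 : ∀ i, f i i₀ (f i₀ i x) = f i i x := by
      intro i; rw [fcomp]; simp
    rw [Finset.sum_congr rfl fun i _ => h2 i]
    have h3 := congrArg (fun T : Module.End R A => T x) fsum
    simpa [LinearMap.sum_apply] using h3
  have hFG : ∀ y, F (G y) = y := by
    intro y
    funext i
    apply Subtype.ext
    have h1 : (F (G y) i : A) = f i₀ i (∑ j, f j i₀ (y j : A)) := by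
      simp [F, G, LinearMap.sum_apply]
    rw [h1, map_sum]
    have h2 : ∀ j, f i₀ i (f j i₀ (y j : A)) = if i = j then f i₀ i₀ (y j : A) else 0 := by
      intro j; rw [fcomp]
    rw [Finset.sum_congr rfl fun j _ => h2 j]
    simp only [Finset.sum_ite_eq, Finset.mem_univ, if_true]
    exact fixN _ (y i).2
  let eqv : A ≃ₗ[R] (ι → N) :=
    LinearEquiv.ofLinear F G (LinearMap.ext hFG) (LinearMap.ext hGF)
  -- N is finite free
  haveI : Module.Finite R N := Module.Finite.range _
  haveI : Module.Projective R N := by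
    refine Module.Projective.of_split N.subtype ((f i₀ i₀).rangeRestrict) ?_
    ext w
    simpa using fixN _ w.2
  haveI : Module.FinitePresentation R N := Module.finitePresentation_of_projective R N
  haveI : Module.Free R N := Module.free_of_flat_of_isLocalRing
  -- rank computation : finrank N = 1
  have hcard : Fintype.card ι = Module.finrank R A :=
    (Module.finrank_eq_card_chooseBasisIndex R A).symm
  have hpos : 0 < Fintype.card ι := Fintype.card_pos
  have hrk : Module.finrank R A = Fintype.card ι * Module.finrank R N := by
    rw [eqv.finrank_eq, Module.finrank_pi_fintype, Finset.sum_const, Finset.card_univ,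
      smul_eq_mul]
  have hone : Module.finrank R N = 1 := by
    have := hrk
    rw [← hcard] at this
    nlinarith [this, hpos]
  -- a generator of N
  obtain ⟨k₀, hk₀⟩ := Fintype.card_eq_one_iff.mp
    (by rw [← Module.finrank_eq_card_chooseBasisIndex R N, hone] :
      Fintype.card (Module.Free.ChooseBasisIndex R N) = 1)
  set bN : Basis (Module.Free.ChooseBasisIndex R N) R N := Module.Free.chooseBasis R N with hbN
  set vA : A := (bN k₀ : A) with hvA
  have hvAN : vA ∈ N := (bN k₀).2
  have spanN : ∀ w ∈ N, ∃ c : R, w = c • vA := by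
    intro w hw
    refine ⟨bN.repr ⟨w, hw⟩ k₀, ?_⟩
    have := bN.sum_repr ⟨w, hw⟩
    rw [Fintype.sum_eq_single k₀ (fun k hk => absurd (hk₀ k) hk)] at this
    exact congrArg Subtype.val this.symm
  -- the conjugating map
  set g₀ : A →ₗ[R] A := b.constr R (fun i => f i i₀ vA) with hg₀
  have hg₀b : ∀ i, g₀ (b i) = f i i₀ vA := fun i => b.constr_basis R _ i
  have gsurj : Function.Surjective g₀ := by
    intro x
    have hx : ∀ i : ι, ∃ c : R, f i₀ i x = c • vA := fun i =>
      spanN _ (memN i x)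
    choose c hc using hx
    refine ⟨∑ i, c i • b i, ?_⟩
    rw [map_sum]
    have h1 : ∀ i, g₀ (c i • b i) = f i i₀ (f i₀ i x) := by
      intro i
      rw [map_smul, hg₀b, ← map_smul, ← hc]
    rw [Finset.sum_congr rfl fun i _ => h1 i]
    have h2 : ∀ i, f i i₀ (f i₀ i x) = f i i x := by
      intro i; rw [fcomp]; simp
    rw [Finset.sum_congr rfl fun i _ => h2 i]
    have h3 := congrArg (fun T : Module.End R A => T x) fsum
    simpa [LinearMap.sum_apply] using h3
  have ginj : Function.Injective g₀ :=
    OrzechProperty.injective_of_surjective_endomorphism g₀ gsurj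
  have keystep : ∀ i j : ι, (f i j) ∘ₗ g₀ = g₀ ∘ₗ (b.end (i, j)) := by
    intro i j
    apply b.ext
    intro k
    simp only [LinearMap.comp_apply, hg₀b, Basis.end_apply_apply]
    rw [fcomp]
    split_ifs with h
    · rw [hg₀b]
    · rw [map_zero]
  have keystep' : ∀ (i j : ι) (x : A), f i j (g₀ x) = g₀ ((b.end (i, j)) x) := by
    intro i j x
    exact congrArg (fun h : A →ₗ[R] A => h x) (keystep i j)
  have main : ∀ (T : Module.End R A) (x : A), Φ T (g₀ x) = g₀ (T x) := by
    intro T x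
    rw [← Basis.sum_repr (b.end) T]
    simp only [map_sum, map_smul, LinearMap.sum_apply, LinearMap.smul_apply]
    refine Finset.sum_congr rfl fun p _ => ?_
    congr 1
    exact keystep' p.1 p.2 x
  exact ⟨LinearEquiv.ofBijective g₀ ⟨ginj, gsurj⟩, main⟩

end EndAut

section AzuMul

variable {R A : Type} [CommRing R] [Ring A] [Algebra R A]

lemma azumayaMulLeftRight_tmul (a : A) (b : Aᵐᵒᵖ) :
    azumayaMulLeftRight R A (a ⊗ₜ b) = LinearMap.mulLeftRight R (a, b.unop) := by
  simp [azumayaMulLeftRight]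

lemma azumayaMulLeftRight_tmul_apply (a : A) (b : Aᵐᵒᵖ) (x : A) :
    azumayaMulLeftRight R A (a ⊗ₜ b) x = a * x * b.unop := by
  rw [azumayaMulLeftRight_tmul, LinearMap.mulLeftRight_apply]

lemma azumayaMulLeftRight_one :
    azumayaMulLeftRight R A 1 = 1 := by
  rw [Algebra.TensorProduct.one_def]
  ext x
  simp [azumayaMulLeftRight_tmul_apply]

lemma azumayaMulLeftRight_mul (s t : TensorProduct R A Aᵐᵒᵖ) :
    azumayaMulLeftRight R A (s * t) = azumayaMulLeftRight R A s * azumayaMulLeftRight R A t := by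
  induction s using TensorProduct.induction_on with
  | zero => simp
  | add a b ha hb => rw [add_mul, map_add, map_add, ha, hb, add_mul]
  | tmul a b =>
    induction t using TensorProduct.induction_on with
    | zero => simp
    | add c d hc hd => rw [mul_add, map_add, map_add, hc, hd, mul_add]
    | tmul c d =>
      rw [Algebra.TensorProduct.tmul_mul_tmul]
      ext x
      simp only [Module.End.mul_apply, azumayaMulLeftRight_tmul_apply, MulOpposite.unop_mul]
      simp only [mul_assoc]

end AzuMul

/-- **Skolem–Noether.** Every algebra automorphism of an Azumaya algebra over a
commutative local ring is inner. -/
theorem statement9 (R A : Type) [CommRing R] [IsLocalRing R] [Ring A] [Algebra R A]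
    (hA : IsAzumaya' R A) (σ : A ≃ₐ[R] A) :
    ∃ u : Aˣ, ∀ a : A, σ a = ↑u * a * ↑u⁻¹ := by
  obtain ⟨hann, hfin, hproj, hbij⟩ := hA
  by_cases hsub : Subsingleton A
  · exact ⟨1, fun a => Subsingleton.elim _ _⟩
  haveI : Nontrivial A := not_subsingleton_iff_nontrivial.mp hsub
  haveI := hfin
  haveI := hproj
  haveI : Module.FinitePresentation R A := Module.finitePresentation_of_projective R A
  haveI : Module.Free R A := Module.free_of_flat_of_isLocalRing
  -- the algebra isomorphism `A ⊗ Aᵐᵒᵖ ≃ₐ End R A`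
  let e : TensorProduct R A Aᵐᵒᵖ ≃ₗ[R] Module.End R A :=
    LinearEquiv.ofBijective (azumayaMulLeftRight R A) hbij
  let ψ : TensorProduct R A Aᵐᵒᵖ ≃ₐ[R] Module.End R A :=
    AlgEquiv.ofLinearEquiv e azumayaMulLeftRight_one azumayaMulLeftRight_mul
  have hψ : ∀ t, ψ t = azumayaMulLeftRight R A t := fun t => rfl
  let τ : TensorProduct R A Aᵐᵒᵖ ≃ₐ[R] TensorProduct R A Aᵐᵒᵖ :=
    Algebra.TensorProduct.congr σ AlgEquiv.refl
  let Φ : Module.End R A ≃ₐ[R] Module.End R A := (ψ.symm.trans τ).trans ψ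
  obtain ⟨g, hg⟩ := SN.end_aut_exists_conj Φ
  have hΦψ : ∀ t, Φ (ψ t) = ψ (τ t) := by
    intro t
    show ψ (τ (ψ.symm (ψ t))) = ψ (τ t)
    rw [ψ.symm_apply_apply t]
  have hτ : ∀ (a : A) (c : Aᵐᵒᵖ), τ (a ⊗ₜ c) = σ a ⊗ₜ c := by
    intro a c
    simp [τ, Algebra.TensorProduct.congr_apply]
  -- key identities
  have key1 : ∀ a y : A, σ a * g y = g (a * y) := by
    intro a y
    have h := hg (ψ (a ⊗ₜ (1 : Aᵐᵒᵖ))) y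
    rw [hΦψ, hτ] at h
    simp only [hψ] at h
    simpa [azumayaMulLeftRight_tmul_apply] using h
  have key2 : ∀ (y c : A), g y * c = g (y * c) := by
    intro y c
    have h := hg (ψ ((1 : A) ⊗ₜ MulOpposite.op c)) y
    rw [hΦψ, hτ, map_one] at h
    simp only [hψ] at h
    simpa [azumayaMulLeftRight_tmul_apply] using h
  set u : A := g 1 with hu
  have hgy : ∀ y : A, g y = u * y := by
    intro y
    rw [hu, key2 1 y, one_mul]
  have hσu : ∀ a : A, σ a * u = u * a := by
    intro a
    have := key1 a 1
    rw [mul_one, hgy a] at this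
    exact this
  obtain ⟨w, hw⟩ := g.surjective 1
  have huw : u * w = 1 := by rw [← hgy w, hw]
  have hwu : w * u = 1 := by
    apply g.injective
    rw [hgy (w * u), hgy 1, mul_one, ← mul_assoc, huw, one_mul]
  refine ⟨⟨u, w, huw, hwu⟩, fun a => ?_⟩
  show σ a = u * a * w
  calc σ a = σ a * (u * w) := by rw [huw, mul_one]
    _ = (σ a * u) * w := by rw [mul_assoc]
    _ = u * a * w := by rw [hσu]

end
end
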